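/- Consider the alphabet 𝒜 = {0,1} and forbidden patterns ℱ = {000, 111} (three consecutive equal letters) on ℤ. In the no-pass Domino game Γ*(𝒜, ℱ, ℤ), in which each player on their turn must colour an uncoloured cell of ℤ (passing is not allowed), the position with empty board and B to move is winning for A (i.e. losing for B); whereas in the Domino game Γ(𝒜, ℱ, ℤ) with passes allowed, the position with empty board and B to move is winning for B. -/

import Mathlib

open Filter Topology

attribute [local instance] Classical.propDecidable

/-- The two players. -/
inductive Player | A | B
deriving DecidableEq

/-- A (possibly partial) colouring of `ℤ`: `none` means uncoloured.
Colours are natural numbers; the alphabet of size `m` is `{0, …, m-1}`. -/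
abbrev BoardZ := ℤ → Option ℕ

/-- A finite pattern on `ℤ`, encoded as a list of tiles (cell, colour). -/
abbrev PatternZ := List (ℤ × ℕ)

/-- A move: `none` is a pass, `some (i, a)` colours cell `i` with colour `a`. -/
abbrev MoveZ := Option (ℤ × ℕ)

/-- A (positional) strategy: a move for every position. -/
abbrev StrategyZ := BoardZ → MoveZ

/-- The pattern `p` occurs in the board `x` translated by `t`. -/
def occursAtZ (p : PatternZ) (x : BoardZ) (t : ℤ) : Prop :=
  ∀ q ∈ p, x (t + q.1) = some q.2

/-- A position is final when a translate of some forbidden pattern occurs. -/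
def isFinalZ (F : Set PatternZ) (x : BoardZ) : Prop :=
  ∃ p ∈ F, ∃ t : ℤ, occursAtZ p x t

/-- A colouring move: an uncoloured cell of `ℤ` receives a colour of the alphabet
`{0, …, m-1}` (a pass is not a colouring move). -/
def legalColour (m : ℕ) (x : BoardZ) : MoveZ → Prop
  | none => False
  | some (i, a) => x i = none ∧ a < m

/-- Legality of a move in the game with passes allowed. -/
def legalZ (m : ℕ) (x : BoardZ) (mv : MoveZ) : Prop :=
  mv = none ∨ legalColour m x mv

def applyZ (x : BoardZ) : MoveZ → BoardZ
  | none => x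
  | some (i, a) => Function.update x i (some a)

/-- One step of the game: the move proposed by the strategy is played if legal
(an illegal move is treated as a pass). -/
noncomputable def stepZ (m : ℕ) (st : StrategyZ) (x : BoardZ) : BoardZ :=
  if legalZ m x (st x) then applyZ x (st x) else x

/-- The play generated by strategies `stA`, `stB` with turn order `s`,
starting from the empty board. -/
noncomputable def playZ (m : ℕ) (s : ℕ → Player) (stA stB : StrategyZ) : ℕ → BoardZ
  | 0 => fun _ => none
  | t + 1 => stepZ m (match s t with | .A => stA | .B => stB) (playZ m s stA stB t)

/-- The alternating turn order: `A` plays first. -/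
def alt : ℕ → Player := fun t => if t % 2 = 0 then .A else .B

/-- A strategy for the no-pass game: on every board having an uncoloured cell,
it plays a legal colouring move (never a pass). -/
def NoPassStrategy (m : ℕ) (st : StrategyZ) : Prop :=
  ∀ x : BoardZ, (∃ i : ℤ, x i = none) → legalColour m x (st x)

/-- The forbidden patterns `000` and `111` on three consecutive cells. -/
def F01 : Set PatternZ :=
  {p | p = [((0 : ℤ), 0), ((1 : ℤ), 0), ((2 : ℤ), 0)] ∨
       p = [((0 : ℤ), 1), ((1 : ℤ), 1), ((2 : ℤ), 1)]}

/-- The turn order where `B` moves first and players alternate. -/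
def altBfirst : ℕ → Player := fun t => if t % 2 = 0 then .B else .A

/- ======================= Auxiliary material ======================= -/

section Aux

lemma stepZ_colour {m : ℕ} {x : BoardZ} {st : StrategyZ} {i : ℤ} {a : ℕ}
    (hmv : st x = some (i, a)) (hi : x i = none) (ha : a < m) :
    stepZ m st x = Function.update x i (some a) := by
  have hleg : legalZ m x (some (i, a)) := Or.inr ⟨hi, ha⟩
  rw [stepZ, hmv, if_pos hleg]
  rfl

lemma stepZ_pass {m : ℕ} {x : BoardZ} {st : StrategyZ} (hmv : st x = none) :
    stepZ m st x = x := by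
  have hleg : legalZ m x none := Or.inl rfl
  rw [stepZ, hmv, if_pos hleg]
  rfl

lemma stepZ_illegal {m : ℕ} {x : BoardZ} {st : StrategyZ} (h : ¬ legalZ m x (st x)) :
    stepZ m st x = x := by
  rw [stepZ, if_neg h]

/-- Building a final position from a monochromatic triple. -/
lemma mkFinal {x : BoardZ} {t : ℤ} {c : ℕ} (hc : c < 2) (h0 : x t = some c)
    (h1 : x (t + 1) = some c) (h2 : x (t + 2) = some c) : isFinalZ F01 x := by
  interval_cases c
  · refine ⟨_, Or.inl rfl, t, ?_⟩
    rintro q hq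
    simp only [List.mem_cons, List.not_mem_nil, or_false] at hq
    rcases hq with rfl | rfl | rfl
    · simpa using h0
    · simpa using h1
    · simpa using h2
  · refine ⟨_, Or.inr rfl, t, ?_⟩
    rintro q hq
    simp only [List.mem_cons, List.not_mem_nil, or_false] at hq
    rcases hq with rfl | rfl | rfl
    · simpa using h0
    · simpa using h1
    · simpa using h2

/-- If no "even" adjacent pair is monochromatic, the position is not final. -/
lemma notFinal {x : BoardZ}
    (h : ∀ i : ℤ, ∀ c : ℕ, i % 2 = 0 → ¬(x i = some c ∧ x (i + 1) = some c)) :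
    ¬ isFinalZ F01 x := by
  have key : ∀ (t : ℤ) (c : ℕ), x t = some c → x (t + 1) = some c → x (t + 2) = some c →
      False := by
    intro t c h0 h1 h2
    rcases Int.emod_two_eq t with ht | ht
    · exact h t c ht ⟨h0, h1⟩
    · refine h (t + 1) c (by omega) ⟨h1, ?_⟩
      rw [show t + 1 + 1 = t + 2 by ring]; exact h2
  rintro ⟨p, hp, t, hocc⟩
  rcases hp with rfl | rfl
  · exact key t 0 (by simpa using hocc ((0 : ℤ), 0) (by simp))
      (by simpa using hocc ((1 : ℤ), 0) (by simp))
      (by simpa using hocc ((2 : ℤ), 0) (by simp))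
  · exact key t 1 (by simpa using hocc ((0 : ℤ), 1) (by simp))
      (by simpa using hocc ((1 : ℤ), 1) (by simp))
      (by simpa using hocc ((2 : ℤ), 1) (by simp))

/- ===================== Part 1 : A wins the no-pass game ===================== -/

/-- A's winning strategy for the no-pass game. -/
noncomputable def stAwin : StrategyZ := fun x =>
  if h1 : ∃ j : ℤ, ∃ b : ℕ, b < 2 ∧ x j = some b ∧ ∀ i, i ≠ j → x i = none then
    some (h1.choose + 1, h1.choose_spec.choose)
  else if h2 : ∃ i : ℤ, ∃ c : ℕ, c < 2 ∧ x i = some c ∧ x (i + 1) = some c ∧ x (i - 1) = none then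
    some (h2.choose - 1, h2.choose_spec.choose)
  else if h3 : ∃ i : ℤ, ∃ c : ℕ, c < 2 ∧ x i = some c ∧ x (i + 1) = some c ∧ x (i + 2) = none then
    some (h3.choose + 2, h3.choose_spec.choose)
  else if h4 : ∃ i : ℤ, x i = none then some (h4.choose, 0)
  else none

lemma stAwin_noPass : NoPassStrategy 2 stAwin := by
  intro x hx
  unfold stAwin
  by_cases h1 : ∃ j : ℤ, ∃ b : ℕ, b < 2 ∧ x j = some b ∧ ∀ i, i ≠ j → x i = none
  · rw [dif_pos h1]
    obtain ⟨hb, hxj, hall⟩ := h1.choose_spec.choose_spec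
    exact ⟨hall _ (by omega), hb⟩
  rw [dif_neg h1]
  by_cases h2 : ∃ i : ℤ, ∃ c : ℕ, c < 2 ∧ x i = some c ∧ x (i + 1) = some c ∧ x (i - 1) = none
  · rw [dif_pos h2]
    obtain ⟨hc, -, -, hnone⟩ := h2.choose_spec.choose_spec
    exact ⟨hnone, hc⟩
  rw [dif_neg h2]
  by_cases h3 : ∃ i : ℤ, ∃ c : ℕ, c < 2 ∧ x i = some c ∧ x (i + 1) = some c ∧ x (i + 2) = none
  · rw [dif_pos h3]
    obtain ⟨hc, -, -, hnone⟩ := h3.choose_spec.choose_spec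
    exact ⟨hnone, hc⟩
  rw [dif_neg h3]
  rw [dif_pos hx]
  exact ⟨hx.choose_spec, by omega⟩

lemma partA : ∃ stA : StrategyZ, NoPassStrategy 2 stA ∧
    ∀ stB : StrategyZ, NoPassStrategy 2 stB →
      ∃ t : ℕ, isFinalZ F01 (playZ 2 altBfirst stA stB t) := by
  refine ⟨stAwin, stAwin_noPass, fun stB hB => ?_⟩
  set P := playZ 2 altBfirst stAwin stB with hP
  -- B's first move
  have hB0 : legalColour 2 (P 0) (stB (P 0)) := hB _ ⟨0, rfl⟩
  rcases hmv0 : stB (P 0) with _ | ⟨j, b⟩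
  · rw [hmv0] at hB0; exact (show False from hB0).elim
  rw [hmv0] at hB0
  have hB0' : (P 0) j = none ∧ b < 2 := hB0
  have hb2 : b < 2 := hB0'.2
  have hP1 : P 1 = Function.update (P 0) j (some b) := by
    show stepZ 2 (match altBfirst 0 with | .A => stAwin | .B => stB) (P 0) = _
    have h0 : altBfirst 0 = Player.B := rfl
    rw [h0]
    exact stepZ_colour hmv0 hB0'.1 hB0'.2
  have hx1j : P 1 j = some b := by rw [hP1]; simp
  have hx1ne : ∀ i, i ≠ j → P 1 i = none := by
    intro i hi; rw [hP1, Function.update_of_ne hi]; rfl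
  -- A's first move
  have hc1 : ∃ j' : ℤ, ∃ b' : ℕ, b' < 2 ∧ P 1 j' = some b' ∧ ∀ i, i ≠ j' → P 1 i = none :=
    ⟨j, b, hb2, hx1j, hx1ne⟩
  have hspec1 := hc1.choose_spec.choose_spec
  set j1 := hc1.choose with hj1def
  set b1 := hc1.choose_spec.choose with hb1def
  obtain ⟨hb1, hx1j1, hall1⟩ := hspec1
  have hmv1 : stAwin (P 1) = some (j1 + 1, b1) := by
    unfold stAwin; rw [dif_pos hc1]
  have hP2 : P 2 = Function.update (P 1) (j1 + 1) (some b1) := by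
    show stepZ 2 (match altBfirst 1 with | .A => stAwin | .B => stB) (P 1) = _
    have h1 : altBfirst 1 = Player.A := rfl
    rw [h1]
    exact stepZ_colour hmv1 (hall1 _ (by omega)) hb1
  have hx2j : P 2 j1 = some b1 := by
    rw [hP2, Function.update_of_ne (by omega : j1 ≠ j1 + 1)]; exact hx1j1
  have hx2j1 : P 2 (j1 + 1) = some b1 := by rw [hP2]; simp
  have hx2ne : ∀ i, i ≠ j1 → i ≠ j1 + 1 → P 2 i = none := by
    intro i hi hi'
    rw [hP2, Function.update_of_ne hi']; exact hall1 i hi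
  -- B's second move
  have hB2 : legalColour 2 (P 2) (stB (P 2)) :=
    hB _ ⟨j1 + 2, hx2ne _ (by omega) (by omega)⟩
  rcases hmv2 : stB (P 2) with _ | ⟨k, d⟩
  · rw [hmv2] at hB2; exact (show False from hB2).elim
  rw [hmv2] at hB2
  have hB2' : (P 2) k = none ∧ d < 2 := hB2
  have hkj : k ≠ j1 := fun h => by rw [h, hx2j] at hB2'; exact nomatch hB2'.1
  have hkj1 : k ≠ j1 + 1 := fun h => by rw [h, hx2j1] at hB2'; exact nomatch hB2'.1
  have hP3 : P 3 = Function.update (P 2) k (some d) := by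
    show stepZ 2 (match altBfirst 2 with | .A => stAwin | .B => stB) (P 2) = _
    have h2 : altBfirst 2 = Player.B := rfl
    rw [h2]
    exact stepZ_colour hmv2 hB2'.1 hB2'.2
  have hx3j : P 3 j1 = some b1 := by
    rw [hP3, Function.update_of_ne (Ne.symm hkj)]; exact hx2j
  have hx3j1 : P 3 (j1 + 1) = some b1 := by
    rw [hP3, Function.update_of_ne (Ne.symm hkj1)]; exact hx2j1
  have hx3k : P 3 k = some d := by rw [hP3]; simp
  have hx3ne : ∀ i, i ≠ j1 → i ≠ j1 + 1 → i ≠ k → P 3 i = none := by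
    intro i hi hi' hik
    rw [hP3, Function.update_of_ne hik]; exact hx2ne i hi hi'
  by_cases hwin3 : (k = j1 - 1 ∧ d = b1) ∨ (k = j1 + 2 ∧ d = b1)
  · -- B completed a triple: final at time 3
    refine ⟨3, ?_⟩
    rcases hwin3 with ⟨rfl, rfl⟩ | ⟨rfl, rfl⟩
    · exact mkFinal hb1 hx3k
        (by rw [show j1 - 1 + 1 = j1 by ring]; exact hx3j)
        (by rw [show j1 - 1 + 2 = j1 + 1 by ring]; exact hx3j1)
    · exact mkFinal hb1 hx3j hx3j1 hx3k
  · -- A completes a triple at time 4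
    refine ⟨4, ?_⟩
    have hne1 : ¬ ∃ j' : ℤ, ∃ b' : ℕ, b' < 2 ∧ P 3 j' = some b' ∧ ∀ i, i ≠ j' → P 3 i = none := by
      rintro ⟨j', b', -, -, hall⟩
      rcases eq_or_ne j1 j' with rfl | hne
      · have := hall (j1 + 1) (by omega); rw [hx3j1] at this; exact nomatch this
      · have := hall j1 hne; rw [hx3j] at this; exact nomatch this
    have hstep4 : P 4 = stepZ 2 stAwin (P 3) := by
      show stepZ 2 (match altBfirst 3 with | .A => stAwin | .B => stB) (P 3) = _
      have h3 : altBfirst 3 = Player.A := rfl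
      rw [h3]
    by_cases hc2 : ∃ i : ℤ, ∃ c : ℕ, c < 2 ∧ P 3 i = some c ∧ P 3 (i + 1) = some c ∧
        P 3 (i - 1) = none
    · have hspec2 := hc2.choose_spec.choose_spec
      set i2 := hc2.choose with hi2def
      set c2 := hc2.choose_spec.choose with hc2def
      obtain ⟨hc2', hxi, hxi1, hxm⟩ := hspec2
      have hmv3 : stAwin (P 3) = some (i2 - 1, c2) := by
        unfold stAwin; rw [dif_neg hne1, dif_pos hc2]
      have hP4 : P 4 = Function.update (P 3) (i2 - 1) (some c2) := by
        rw [hstep4]; exact stepZ_colour hmv3 hxm hc2'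
      refine mkFinal hc2' (t := i2 - 1) ?_ ?_ ?_
      · rw [hP4]; simp
      · rw [hP4, show i2 - 1 + 1 = i2 by ring, Function.update_of_ne (by omega : i2 ≠ i2 - 1)]
        exact hxi
      · rw [hP4, show i2 - 1 + 2 = i2 + 1 by ring,
          Function.update_of_ne (by omega : i2 + 1 ≠ i2 - 1)]
        exact hxi1
    · have hk : k = j1 - 1 := by
        by_contra hk
        exact hc2 ⟨j1, b1, hb1, hx3j, hx3j1,
          hx3ne (j1 - 1) (by omega) (by omega) (by omega)⟩
      have hc3 : ∃ i : ℤ, ∃ c : ℕ, c < 2 ∧ P 3 i = some c ∧ P 3 (i + 1) = some c ∧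
          P 3 (i + 2) = none :=
        ⟨j1, b1, hb1, hx3j, hx3j1, hx3ne (j1 + 2) (by omega) (by omega) (by omega)⟩
      have hspec3 := hc3.choose_spec.choose_spec
      set i3 := hc3.choose with hi3def
      set c3 := hc3.choose_spec.choose with hc3def
      obtain ⟨hc3', hxi, hxi1, hxp⟩ := hspec3
      have hmv3 : stAwin (P 3) = some (i3 + 2, c3) := by
        unfold stAwin; rw [dif_neg hne1, dif_neg hc2, dif_pos hc3]
      have hP4 : P 4 = Function.update (P 3) (i3 + 2) (some c3) := by
        rw [hstep4]; exact stepZ_colour hmv3 hxp hc3'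
      refine mkFinal hc3' (t := i3) ?_ ?_ ?_
      · rw [hP4, Function.update_of_ne (by omega : i3 ≠ i3 + 2)]; exact hxi
      · rw [hP4, Function.update_of_ne (by omega : i3 + 1 ≠ i3 + 2)]; exact hxi1
      · rw [hP4]; simp

/- ===================== Part 2 : B wins the game with passes ===================== -/

def partnerZ (i : ℤ) : ℤ := if i % 2 = 0 then i + 1 else i - 1

lemma partnerZ_invol (i : ℤ) : partnerZ (partnerZ i) = i := by
  unfold partnerZ; split_ifs <;> omega

lemma partnerZ_ne (i : ℤ) : partnerZ i ≠ i := by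
  unfold partnerZ; split_ifs <;> omega

/-- Every coloured cell has its partner coloured with the opposite colour. -/
def GoodB (x : BoardZ) : Prop :=
  ∀ i a, x i = some a → a < 2 ∧ x (partnerZ i) = some (1 - a)

/-- Good except possibly at cell `j`, whose partner is uncoloured. -/
def AGB (x : BoardZ) (j : ℤ) : Prop :=
  (∀ a, x j = some a → a < 2) ∧ x (partnerZ j) = none ∧
    ∀ i a, i ≠ j → x i = some a → a < 2 ∧ x (partnerZ i) = some (1 - a)

def InvB (x : BoardZ) : Prop := GoodB x ∨ ∃ j, AGB x j

/-- B's strategy in the game with passes. -/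
noncomputable def stBwin : StrategyZ := fun x =>
  if h : ∃ j : ℤ, ∃ a : ℕ, x j = some a ∧ x (partnerZ j) = none then
    some (partnerZ h.choose, 1 - h.choose_spec.choose)
  else none

lemma stepB_good {x : BoardZ} (h : InvB x) : GoodB (stepZ 2 stBwin x) := by
  by_cases hc : ∃ j : ℤ, ∃ a : ℕ, x j = some a ∧ x (partnerZ j) = none
  · -- B repairs the half pair
    have hspec := hc.choose_spec.choose_spec
    set j0 := hc.choose with hj0def
    set a0 := hc.choose_spec.choose with ha0def
    obtain ⟨hx0, hpn0⟩ := hspec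
    have hmv : stBwin x = some (partnerZ j0, 1 - a0) := by
      unfold stBwin; rw [dif_pos hc]
    rcases h with h | ⟨j, hjsmall, hpn, hgood⟩
    · exfalso
      have := (h j0 a0 hx0).2
      rw [hpn0] at this; exact nomatch this
    have hj : j0 = j := by
      by_contra hne
      have := (hgood j0 a0 hne hx0).2
      rw [hpn0] at this; exact nomatch this
    have ha2 : a0 < 2 := hjsmall a0 (by rw [← hj]; exact hx0)
    rw [stepZ_colour hmv hpn0 (by omega)]
    intro i b hib
    rcases eq_or_ne i (partnerZ j0) with rfl | hnei
    · rw [Function.update_self] at hib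
      have hb : 1 - a0 = b := Option.some.inj hib
      refine ⟨by omega, ?_⟩
      rw [partnerZ_invol, Function.update_of_ne (Ne.symm (partnerZ_ne j0)), hx0]
      congr 1
      omega
    · rw [Function.update_of_ne hnei] at hib
      rcases eq_or_ne i j0 with rfl | hneij
      · have hb : b = a0 := by rw [hx0] at hib; exact (Option.some.inj hib).symm
        refine ⟨by omega, ?_⟩
        rw [Function.update_self, hb]
      · have h3 := hgood i b (by rw [← hj]; exact hneij) hib
        refine ⟨h3.1, ?_⟩
        have hpp : partnerZ i ≠ partnerZ j0 := fun he =>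
          hneij (by rw [← partnerZ_invol i, he, partnerZ_invol])
        rw [Function.update_of_ne hpp]; exact h3.2
  · -- no half pair : B passes, and the position is in fact good
    have hmv : stBwin x = none := by unfold stBwin; rw [dif_neg hc]
    rw [stepZ_pass hmv]
    rcases h with h | ⟨j, hjsmall, hpn, hgood⟩
    · exact h
    · intro i a hia
      rcases eq_or_ne i j with rfl | hne
      · exact absurd ⟨i, a, hia, hpn⟩ hc
      · exact hgood i a hne hia

lemma stepA_inv (st : StrategyZ) {x : BoardZ} (h : GoodB x) : InvB (stepZ 2 st x) := by
  by_cases hleg : legalZ 2 x (st x)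
  · rcases hmv : st x with _ | ⟨i, a⟩
    · rw [stepZ_pass hmv]; exact Or.inl h
    · rcases hleg with hpass | hcol
      · rw [hmv] at hpass; exact nomatch hpass
      rw [hmv] at hcol
      have hcol' : x i = none ∧ a < 2 := hcol
      rw [stepZ_colour hmv hcol'.1 hcol'.2]
      refine Or.inr ⟨i, ?_, ?_, ?_⟩
      · intro b hb
        rw [Function.update_self] at hb
        have := Option.some.inj hb; omega
      · rw [Function.update_of_ne (partnerZ_ne i)]
        rcases hxp : x (partnerZ i) with _ | c
        · rfl
        · exfalso
          have h2 := (h _ c hxp).2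
          rw [partnerZ_invol, hcol'.1] at h2
          exact nomatch h2
      · intro i' b hne hib
        rw [Function.update_of_ne hne] at hib
        obtain ⟨hb2, hpart⟩ := h i' b hib
        refine ⟨hb2, ?_⟩
        have hni : partnerZ i' ≠ i := by
          intro he
          rw [he, hcol'.1] at hpart
          exact nomatch hpart
        rw [Function.update_of_ne hni]; exact hpart
  · rw [stepZ_illegal hleg]; exact Or.inl h

lemma invariantB (stA : StrategyZ) : ∀ t : ℕ,
    (t % 2 = 1 → GoodB (playZ 2 altBfirst stA stBwin t)) ∧
    (t % 2 = 0 → InvB (playZ 2 altBfirst stA stBwin t)) := by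
  intro t
  induction t with
  | zero =>
    refine ⟨fun h => absurd h (by norm_num), fun _ => Or.inl ?_⟩
    intro i a hia
    exact nomatch hia
  | succ t ih =>
    rcases Nat.mod_two_eq_zero_or_one t with ht | ht
    · -- B moves
      have hstep : playZ 2 altBfirst stA stBwin (t + 1)
          = stepZ 2 stBwin (playZ 2 altBfirst stA stBwin t) := by
        show stepZ 2 (match altBfirst t with | .A => stA | .B => stBwin) _ = _
        have hm : altBfirst t = Player.B := by simp [altBfirst, ht]
        rw [hm]
      refine ⟨fun _ => ?_, fun h => absurd h (by omega)⟩
      rw [hstep]; exact stepB_good (ih.2 ht)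
    · -- A moves
      have hstep : playZ 2 altBfirst stA stBwin (t + 1)
          = stepZ 2 stA (playZ 2 altBfirst stA stBwin t) := by
        show stepZ 2 (match altBfirst t with | .A => stA | .B => stBwin) _ = _
        have hm : altBfirst t = Player.A := by simp [altBfirst, ht]
        rw [hm]
      refine ⟨fun h => absurd h (by omega), fun _ => ?_⟩
      rw [hstep]; exact stepA_inv stA (ih.1 ht)

lemma noMono_Good {x : BoardZ} (h : GoodB x) :
    ∀ i : ℤ, ∀ c : ℕ, i % 2 = 0 → ¬(x i = some c ∧ x (i + 1) = some c) := by
  rintro i c hi ⟨h0, h1⟩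
  have hp : partnerZ i = i + 1 := by unfold partnerZ; rw [if_pos hi]
  obtain ⟨hc2, hx⟩ := h i c h0
  rw [hp, h1] at hx
  have := Option.some.inj hx
  omega

lemma noMono_AG {x : BoardZ} {j : ℤ} (h : AGB x j) :
    ∀ i : ℤ, ∀ c : ℕ, i % 2 = 0 → ¬(x i = some c ∧ x (i + 1) = some c) := by
  rintro i c hi ⟨h0, h1⟩
  obtain ⟨hsmall, hpn, hgood⟩ := h
  have hp : partnerZ i = i + 1 := by unfold partnerZ; rw [if_pos hi]
  rcases eq_or_ne i j with rfl | hne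
  · rw [hp] at hpn; rw [hpn] at h1; exact nomatch h1
  · obtain ⟨hc2, hx⟩ := hgood i c hne h0
    rw [hp, h1] at hx
    have := Option.some.inj hx
    omega

lemma partB : ∃ stB : StrategyZ, ∀ stA : StrategyZ, ∀ t : ℕ,
    ¬ isFinalZ F01 (playZ 2 altBfirst stA stB t) := by
  refine ⟨stBwin, fun stA t => ?_⟩
  rcases Nat.mod_two_eq_zero_or_one t with ht | ht
  · have h := (invariantB stA t).2 ht
    rcases h with h | ⟨j, h⟩
    · exact notFinal (noMono_Good h)
    · exact notFinal (noMono_AG h)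
  · exact notFinal (noMono_Good ((invariantB stA t).1 ht))

end Aux

/-- With alphabet `{0,1}` and forbidden patterns `{000, 111}` on `ℤ`:
in the no-pass game `Γ*`, the position with empty board and `B` to move is winning
for `A`; in the game `Γ` with passes allowed, it is winning for `B`. -/
theorem zugzwang_000_111 :
    (∃ stA : StrategyZ, NoPassStrategy 2 stA ∧
        ∀ stB : StrategyZ, NoPassStrategy 2 stB →
          ∃ t : ℕ, isFinalZ F01 (playZ 2 altBfirst stA stB t)) ∧
    (∃ stB : StrategyZ, ∀ stA : StrategyZ, ∀ t : ℕ,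
        ¬ isFinalZ F01 (playZ 2 altBfirst stA stB t)) := by
  exact ⟨partA, partB⟩
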